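/- (Span equality for the Rădulescu-type vectors) Under the q-commutation hypotheses below, write s = c + c* and s_r = c_r + c_r*. Then for all natural numbers n, m, the vector s^n·s_r^m·ξ lies in the ℂ-linear span of {ξ_{s,t} : s, t ∈ ℕ}; and conversely, for all natural numbers s, t, the vector ξ_{s,t} lies in the ℂ-linear span of {s^n·s_r^m·ξ : n, m ∈ ℕ}. -/
import Mathlib


open ContinuousLinearMap

set_option maxHeartbeats 2000000 in
/-- Span equality for the Rădulescu-type vectors: with `s = c + c*` and `s_r = c_r + c_r*`,
the vectors `s^n s_r^m ξ` and the vectors `ξ_{s,t} = c^s c_r^t ξ` have the same linear span. -/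
theorem span_radulescu_vectors (q : ℝ) (hq₁ : -1 < q) (hq₂ : q < 1)
    {H : Type*} [NormedAddCommGroup H] [InnerProductSpace ℂ H] [CompleteSpace H]
    (c cr W : H →L[ℂ] H)
    (h1 : adjoint c * c = (q : ℂ) • (c * adjoint c) + 1)
    (h2 : adjoint cr * cr = (q : ℂ) • (cr * adjoint cr) + 1)
    (h3 : c * cr = cr * c)
    (h4 : adjoint c * cr = cr * adjoint c + W)
    (h5 : adjoint cr * c = c * adjoint cr + W)
    (h6 : W * c = (q : ℂ) • (c * W))
    (h7 : W * cr = (q : ℂ) • (cr * W))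
    (h8 : adjoint c * W = (q : ℂ) • (W * adjoint c))
    (h9 : adjoint cr * W = (q : ℂ) • (W * adjoint cr))
    (k : ℕ) (ξ : H) (hξ : ‖ξ‖ = 1)
    (hc : adjoint c ξ = 0) (hcr : adjoint cr ξ = 0)
    (hW : W ξ = ((q : ℂ) ^ k) • ξ) :
    (∀ n m : ℕ, (((c + adjoint c) ^ n * (cr + adjoint cr) ^ m) ξ) ∈
        Submodule.span ℂ {v : H | ∃ s t : ℕ, v = (c ^ s * cr ^ t) ξ}) ∧
    (∀ s t : ℕ, ((c ^ s * cr ^ t) ξ) ∈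
        Submodule.span ℂ
          {v : H | ∃ n m : ℕ, v = ((c + adjoint c) ^ n * (cr + adjoint cr) ^ m) ξ}) := by
  have hcomm : Commute c cr := h3
  -- operator-level commutation lemmas
  have hWcr : ∀ t : ℕ, W * cr ^ t = ((q:ℂ)^t) • (cr ^ t * W) := by
    intro t; induction t with
    | zero => simp
    | succ t ih =>
      rw [pow_succ, ← mul_assoc, ih, smul_mul_assoc, mul_assoc, h7,
        mul_smul_comm, smul_smul, ← mul_assoc, ← pow_succ, ← pow_succ]
  have hAcs : ∀ s : ℕ, ∃ a : ℂ, adjoint c * c ^ (s+1)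
      = ((q:ℂ)^(s+1)) • (c ^ (s+1) * adjoint c) + a • c ^ s := by
    intro s; induction s with
    | zero => exact ⟨1, by simpa using h1⟩
    | succ s ih =>
      obtain ⟨a, ha⟩ := ih
      refine ⟨(q:ℂ) * a + 1, ?_⟩
      have h : adjoint c * c ^ (s+2) = (adjoint c * c) * c ^ (s+1) := by
        rw [mul_assoc, ← pow_succ']
      rw [h, h1, add_mul, one_mul, smul_mul_assoc, mul_assoc, ha]
      simp only [mul_add, smul_add, smul_smul, mul_smul_comm, ← mul_assoc, ← pow_succ']
      module
  have hAcr : ∀ t : ℕ, ∃ a : ℂ, adjoint c * cr ^ (t+1)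
      = cr ^ (t+1) * adjoint c + a • (cr ^ t * W) := by
    intro t; induction t with
    | zero => exact ⟨1, by simpa using h4⟩
    | succ t ih =>
      obtain ⟨a, ha⟩ := ih
      refine ⟨1 + (q:ℂ) * a, ?_⟩
      have h : adjoint c * cr ^ (t+2) = (adjoint c * cr ^ (t+1)) * cr := by
        rw [mul_assoc, ← pow_succ]
      rw [h, ha, add_mul, smul_mul_assoc, mul_assoc, h4,
        mul_assoc (cr ^ t) W cr, h7]
      simp only [mul_add, smul_add, mul_smul_comm, smul_smul, ← mul_assoc, ← pow_succ]
      module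
  have hBcr : ∀ t : ℕ, ∃ a : ℂ, adjoint cr * cr ^ (t+1)
      = ((q:ℂ)^(t+1)) • (cr ^ (t+1) * adjoint cr) + a • cr ^ t := by
    intro t; induction t with
    | zero => exact ⟨1, by simpa using h2⟩
    | succ t ih =>
      obtain ⟨a, ha⟩ := ih
      refine ⟨(q:ℂ) * a + 1, ?_⟩
      have h : adjoint cr * cr ^ (t+2) = (adjoint cr * cr) * cr ^ (t+1) := by
        rw [mul_assoc, ← pow_succ']
      rw [h, h2, add_mul, one_mul, smul_mul_assoc, mul_assoc, ha]
      simp only [mul_add, smul_add, smul_smul, mul_smul_comm, ← mul_assoc, ← pow_succ']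
      module
  have hBc : ∀ s : ℕ, ∃ a : ℂ, adjoint cr * c ^ (s+1)
      = c ^ (s+1) * adjoint cr + a • (c ^ s * W) := by
    intro s; induction s with
    | zero => exact ⟨1, by simpa using h5⟩
    | succ s ih =>
      obtain ⟨a, ha⟩ := ih
      refine ⟨1 + (q:ℂ) * a, ?_⟩
      have h : adjoint cr * c ^ (s+2) = (adjoint cr * c ^ (s+1)) * c := by
        rw [mul_assoc, ← pow_succ]
      rw [h, ha, add_mul, smul_mul_assoc, mul_assoc, h5,
        mul_assoc (c ^ s) W c, h6]
      simp only [mul_add, smul_add, mul_smul_comm, smul_smul, ← mul_assoc, ← pow_succ]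
      module
  -- vector-level lemmas
  have hWv : ∀ t : ℕ, W ((cr ^ t) ξ) = ((q:ℂ)^(t+k)) • ((cr ^ t) ξ) := by
    intro t
    rw [← ContinuousLinearMap.mul_apply, hWcr t]
    simp only [ContinuousLinearMap.smul_apply, ContinuousLinearMap.mul_apply, hW,
      map_smul, smul_smul, ← pow_add]
  have hAv : ∀ t : ℕ, ∃ b : ℂ, adjoint c ((cr ^ (t+1)) ξ) = b • ((cr ^ t) ξ) := by
    intro t
    obtain ⟨a, ha⟩ := hAcr t
    refine ⟨a * (q:ℂ)^k, ?_⟩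
    rw [← ContinuousLinearMap.mul_apply, ha]
    simp only [ContinuousLinearMap.add_apply, ContinuousLinearMap.smul_apply,
      ContinuousLinearMap.mul_apply, hc, map_zero, zero_add, hW, map_smul, smul_smul]
  have hBv : ∀ t : ℕ, ∃ b : ℂ, adjoint cr ((cr ^ (t+1)) ξ) = b • ((cr ^ t) ξ) := by
    intro t
    obtain ⟨a, ha⟩ := hBcr t
    refine ⟨a, ?_⟩
    rw [← ContinuousLinearMap.mul_apply, ha]
    simp only [ContinuousLinearMap.add_apply, ContinuousLinearMap.smul_apply,
      ContinuousLinearMap.mul_apply, hcr, map_zero, smul_zero, zero_add]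
  -- the filtration
  set SpanLT : ℕ → Submodule ℂ H := fun d =>
    Submodule.span ℂ {v : H | ∃ a b : ℕ, a + b < d ∧ v = (c ^ a * cr ^ b) ξ} with hSpanLT
  have hmono : ∀ {d d' : ℕ}, d ≤ d' → SpanLT d ≤ SpanLT d' := by
    intro d d' hdd
    apply Submodule.span_mono
    rintro v ⟨a, b, hab, rfl⟩
    exact ⟨a, b, lt_of_lt_of_le hab hdd, rfl⟩
  have hgen : ∀ {d : ℕ} (a b : ℕ), a + b < d → ((c ^ a * cr ^ b) ξ) ∈ SpanLT d := by
    intro d a b hab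
    exact Submodule.subset_span ⟨a, b, hab, rfl⟩
  -- action of c and cr on the basis vectors
  have memC : ∀ s t : ℕ, c ((c ^ s * cr ^ t) ξ) = (c ^ (s+1) * cr ^ t) ξ := by
    intro s t
    rw [← ContinuousLinearMap.mul_apply, ← mul_assoc, ← pow_succ']
  have memCr : ∀ s t : ℕ, cr ((c ^ s * cr ^ t) ξ) = (c ^ s * cr ^ (t+1)) ξ := by
    intro s t
    rw [← ContinuousLinearMap.mul_apply, ← mul_assoc,
      (hcomm.symm.pow_right s).eq, mul_assoc, ← pow_succ']
  -- key annihilation estimates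
  have keyCstar : ∀ s t : ℕ, adjoint c ((c ^ s * cr ^ t) ξ) ∈ SpanLT (s + t) := by
    intro s t
    match s, t with
    | 0, 0 => simp [hc]
    | 0, t+1 =>
      obtain ⟨b, hb⟩ := hAv t
      have : adjoint c ((c ^ 0 * cr ^ (t+1)) ξ) = b • ((c ^ 0 * cr ^ t) ξ) := by
        simpa using hb
      rw [this]
      exact Submodule.smul_mem _ _ (hgen 0 t (by omega))
    | s+1, t =>
      obtain ⟨a, ha⟩ := hAcs s
      have e1 : adjoint c ((c ^ (s+1) * cr ^ t) ξ)
          = ((q:ℂ)^(s+1)) • ((c ^ (s+1)) (adjoint c ((cr ^ t) ξ)))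
            + a • ((c ^ s * cr ^ t) ξ) := by
        rw [ContinuousLinearMap.mul_apply, ← ContinuousLinearMap.mul_apply (adjoint c), ha]
        simp only [ContinuousLinearMap.add_apply, ContinuousLinearMap.smul_apply,
          ContinuousLinearMap.mul_apply]
      rw [e1]
      have hsecond : (a • ((c ^ s * cr ^ t) ξ)) ∈ SpanLT (s + 1 + t) :=
        Submodule.smul_mem _ _ (hgen s t (by omega))
      match t with
      | 0 =>
        simp only [pow_zero, ContinuousLinearMap.one_apply, hc, map_zero, smul_zero, zero_add]
        exact hsecond
      | t+1 =>
        obtain ⟨b, hb⟩ := hAv t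
        rw [hb, map_smul]
        refine Submodule.add_mem _ ?_ hsecond
        rw [← ContinuousLinearMap.mul_apply, smul_smul]
        exact Submodule.smul_mem _ _ (hgen (s+1) t (by omega))
  have keyCrstar : ∀ s t : ℕ, adjoint cr ((c ^ s * cr ^ t) ξ) ∈ SpanLT (s + t) := by
    intro s t
    match s, t with
    | 0, 0 => simp [hcr]
    | 0, t+1 =>
      obtain ⟨b, hb⟩ := hBv t
      have : adjoint cr ((c ^ 0 * cr ^ (t+1)) ξ) = b • ((c ^ 0 * cr ^ t) ξ) := by
        simpa using hb
      rw [this]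
      exact Submodule.smul_mem _ _ (hgen 0 t (by omega))
    | s+1, t =>
      obtain ⟨a, ha⟩ := hBc s
      have e1 : adjoint cr ((c ^ (s+1) * cr ^ t) ξ)
          = (c ^ (s+1)) (adjoint cr ((cr ^ t) ξ))
            + a • ((c ^ s) (W ((cr ^ t) ξ))) := by
        rw [ContinuousLinearMap.mul_apply, ← ContinuousLinearMap.mul_apply (adjoint cr), ha]
        simp only [ContinuousLinearMap.add_apply, ContinuousLinearMap.smul_apply,
          ContinuousLinearMap.mul_apply]
      rw [e1]
      have hsecond : (a • ((c ^ s) (W ((cr ^ t) ξ)))) ∈ SpanLT (s + 1 + t) := by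
        rw [hWv t, map_smul, smul_smul, ← ContinuousLinearMap.mul_apply]
        exact Submodule.smul_mem _ _ (hgen s t (by omega))
      match t with
      | 0 =>
        simp only [pow_zero, ContinuousLinearMap.one_apply, hcr, map_zero, zero_add]
        exact hsecond
      | t+1 =>
        obtain ⟨b, hb⟩ := hBv t
        rw [hb, map_smul, ← ContinuousLinearMap.mul_apply]
        exact Submodule.add_mem _
          (Submodule.smul_mem _ _ (hgen (s+1) t (by omega))) hsecond
  -- the semicircular operators move the filtration up by one
  have stepS : ∀ (d : ℕ) (x : H), x ∈ SpanLT d → (c + adjoint c) x ∈ SpanLT (d+1) := by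
    intro d x hx
    induction hx using Submodule.span_induction with
    | mem v hv =>
      obtain ⟨a, b, hab, rfl⟩ := hv
      rw [ContinuousLinearMap.add_apply, memC a b]
      exact Submodule.add_mem _ (hgen (a+1) b (by omega))
        ((hmono (by omega)) (keyCstar a b))
    | zero => simp
    | add x y hx hy ihx ihy => rw [map_add]; exact Submodule.add_mem _ ihx ihy
    | smul r x hx ihx => rw [map_smul]; exact Submodule.smul_mem _ _ ihx
  have stepSr : ∀ (d : ℕ) (x : H), x ∈ SpanLT d → (cr + adjoint cr) x ∈ SpanLT (d+1) := by
    intro d x hx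
    induction hx using Submodule.span_induction with
    | mem v hv =>
      obtain ⟨a, b, hab, rfl⟩ := hv
      rw [ContinuousLinearMap.add_apply, memCr a b]
      exact Submodule.add_mem _ (hgen a (b+1) (by omega))
        ((hmono (by omega)) (keyCrstar a b))
    | zero => simp
    | add x y hx hy ihx ihy => rw [map_add]; exact Submodule.add_mem _ ihx ihy
    | smul r x hx ihx => rw [map_smul]; exact Submodule.smul_mem _ _ ihx
  -- the key difference lemma
  have keyD : ∀ n m : ℕ,
      (((c + adjoint c) ^ n * (cr + adjoint cr) ^ m) ξ) - ((c ^ n * cr ^ m) ξ)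
        ∈ SpanLT (n + m) := by
    intro n
    induction n with
    | zero =>
      intro m
      induction m with
      | zero => simp
      | succ m ihm =>
        have e1 : ((c + adjoint c) ^ 0 * (cr + adjoint cr) ^ (m+1)) ξ
            = (cr + adjoint cr) (((c + adjoint c) ^ 0 * (cr + adjoint cr) ^ m) ξ) := by
          simp only [pow_zero, one_mul, pow_succ']
          rw [ContinuousLinearMap.mul_apply]
        have e2 : ((c + adjoint c) ^ 0 * (cr + adjoint cr) ^ (m+1)) ξ
              - ((c ^ 0 * cr ^ (m+1)) ξ)
            = (cr + adjoint cr)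
                ((((c + adjoint c) ^ 0 * (cr + adjoint cr) ^ m) ξ) - ((c ^ 0 * cr ^ m) ξ))
              + adjoint cr ((c ^ 0 * cr ^ m) ξ) := by
          rw [map_sub, ← e1, ContinuousLinearMap.add_apply, memCr 0 m]
          abel
        rw [e2]
        simp only [Nat.zero_add] at ihm ⊢
        refine Submodule.add_mem _ (stepSr m _ ihm) ?_
        exact (hmono (by omega)) (keyCrstar 0 m)
    | succ n ihn =>
      intro m
      have e1 : ((c + adjoint c) ^ (n+1) * (cr + adjoint cr) ^ m) ξ
          = (c + adjoint c) (((c + adjoint c) ^ n * (cr + adjoint cr) ^ m) ξ) := by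
        rw [pow_succ', mul_assoc, ContinuousLinearMap.mul_apply]
      have e2 : ((c + adjoint c) ^ (n+1) * (cr + adjoint cr) ^ m) ξ
            - ((c ^ (n+1) * cr ^ m) ξ)
          = (c + adjoint c)
              ((((c + adjoint c) ^ n * (cr + adjoint cr) ^ m) ξ) - ((c ^ n * cr ^ m) ξ))
            + adjoint c ((c ^ n * cr ^ m) ξ) := by
        rw [map_sub, ← e1, ContinuousLinearMap.add_apply, memC n m]
        abel
      rw [e2]
      have h1' : n + m + 1 ≤ n + 1 + m := by omega
      refine Submodule.add_mem _ ((hmono h1') (stepS (n+m) _ (ihn m))) ?_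
      exact (hmono (by omega)) (keyCstar n m)
  constructor
  · -- first direction
    set T1 := Submodule.span ℂ {v : H | ∃ s t : ℕ, v = (c ^ s * cr ^ t) ξ} with hT1
    have hLTle : ∀ d : ℕ, SpanLT d ≤ T1 := by
      intro d
      apply Submodule.span_mono
      rintro v ⟨a, b, _, rfl⟩
      exact ⟨a, b, rfl⟩
    have hT1c : ∀ x : H, x ∈ T1 → (c + adjoint c) x ∈ T1 := by
      intro x hx
      induction hx using Submodule.span_induction with
      | mem v hv =>
        obtain ⟨a, b, rfl⟩ := hv
        rw [ContinuousLinearMap.add_apply, memC a b]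
        exact Submodule.add_mem _ (Submodule.subset_span ⟨a+1, b, rfl⟩)
          (hLTle _ (keyCstar a b))
      | zero => simp
      | add x y hx hy ihx ihy => rw [map_add]; exact Submodule.add_mem _ ihx ihy
      | smul r x hx ihx => rw [map_smul]; exact Submodule.smul_mem _ _ ihx
    have hT1cr : ∀ x : H, x ∈ T1 → (cr + adjoint cr) x ∈ T1 := by
      intro x hx
      induction hx using Submodule.span_induction with
      | mem v hv =>
        obtain ⟨a, b, rfl⟩ := hv
        rw [ContinuousLinearMap.add_apply, memCr a b]
        exact Submodule.add_mem _ (Submodule.subset_span ⟨a, b+1, rfl⟩)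
          (hLTle _ (keyCrstar a b))
      | zero => simp
      | add x y hx hy ihx ihy => rw [map_add]; exact Submodule.add_mem _ ihx ihy
      | smul r x hx ihx => rw [map_smul]; exact Submodule.smul_mem _ _ ihx
    have hT1cpow : ∀ (n : ℕ) (x : H), x ∈ T1 → ((c + adjoint c) ^ n) x ∈ T1 := by
      intro n
      induction n with
      | zero => intro x hx; simpa using hx
      | succ n ih =>
        intro x hx
        rw [pow_succ', ContinuousLinearMap.mul_apply]
        exact hT1c _ (ih x hx)
    have hT1crpow : ∀ (m : ℕ) (x : H), x ∈ T1 → ((cr + adjoint cr) ^ m) x ∈ T1 := by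
      intro m
      induction m with
      | zero => intro x hx; simpa using hx
      | succ m ih =>
        intro x hx
        rw [pow_succ', ContinuousLinearMap.mul_apply]
        exact hT1cr _ (ih x hx)
    intro n m
    rw [ContinuousLinearMap.mul_apply]
    refine hT1cpow n _ (hT1crpow m _ ?_)
    exact Submodule.subset_span ⟨0, 0, by simp⟩
  · -- second direction
    set T2 := Submodule.span ℂ
        {v : H | ∃ n m : ℕ, v = ((c + adjoint c) ^ n * (cr + adjoint cr) ^ m) ξ} with hT2
    have main : ∀ (d : ℕ) (s t : ℕ), s + t ≤ d → ((c ^ s * cr ^ t) ξ) ∈ T2 := by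
      intro d
      induction d with
      | zero =>
        intro s t hst
        obtain ⟨rfl, rfl⟩ : s = 0 ∧ t = 0 := by omega
        refine Submodule.subset_span ⟨0, 0, by simp⟩
      | succ d ihd =>
        intro s t hst
        rcases le_or_gt (s + t) d with h | h
        · exact ihd s t h
        · have hle : SpanLT (s + t) ≤ T2 := by
            rw [hSpanLT]
            apply Submodule.span_le.mpr
            rintro v ⟨a, b, hab, rfl⟩
            exact ihd a b (by omega)
          have hmem : (((c + adjoint c) ^ s * (cr + adjoint cr) ^ t) ξ) ∈ T2 :=
            Submodule.subset_span ⟨s, t, rfl⟩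
          have := Submodule.sub_mem T2 hmem (hle (keyD s t))
          simpa using this
    intro s t
    exact main (s + t) s t le_rfl
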